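/- Let F ⊆ C be a set (the free space), let ρ > 0, and let γ : [0,1] → C be a continuous path with γ(0) = p, γ(1) = q, with clearance ρ (i.e., closedBall (γ t) ρ ⊆ F for every t ∈ [0,1]) and with length at most L (i.e., eVariationOn γ [0,1] ≤ L for some real L > 0). Let μ and ν be Borel probability measures on A and B respectively, and suppose there are constants α, β ∈ (0,1] such that μ(closedBall (γ t)_A (ρ/√2)) ≥ α for every t ∈ [0,1], and ν(closedBall (γ t)_B (ρ/√2) ∩ closedBall (γ s)_B (ρ/√2)) ≥ β for all t, s ∈ [0,1] with dist(γ t, γ s) ≤ ρ. Consider the product probability space Ω = (Fin n_A → A) × (Fin n_B → B) with the i.i.d. product measure P of μ and ν. Then there exists a measurable event E ⊆ Ω with P(E) ≥ 1 − ⌈L/ρ⌉·((1 − α)^{n_A} + (1 − β)^{n_B}) such that for every sample (a, b) ∈ E there exists a continuous path δ : [0,1] → C from p to q whose image is contained in F ∩ (m(p_A) ∪ m(q_A) ∪ (⋃_{u} m(a(u))) ∪ (⋃_{v} m(b(v)))). -/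

import Mathlib

open Metric MeasureTheory ENNReal

section VariationLemmas

open Set

private lemma evar_right {E : Type*} [PseudoEMetricSpace E] {f : ℝ → E}
    (hf : ContinuousOn f (Icc 0 1)) (hfin : eVariationOn f (Icc 0 1) ≠ ⊤)
    {x : ℝ} (hx0 : 0 ≤ x) (hx1 : x < 1) {ε : ℝ≥0∞} (hε : 0 < ε) :
    ∃ y, x < y ∧ y ≤ 1 ∧ eVariationOn f (Icc 0 1 ∩ Icc x y) ≤ ε := by
  classical
  set s : Set ℝ := Icc (0:ℝ) 1 with hs
  set W := eVariationOn f (s ∩ Icc x 1) with hW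
  have hWfin : W ≠ ⊤ := ne_top_of_le_ne_top hfin (eVariationOn.mono f inter_subset_left)
  by_cases hcase : W ≤ ε
  · exact ⟨1, hx1, le_rfl, hcase⟩
  · push_neg at hcase
    have hxs : x ∈ s := ⟨hx0, hx1.le⟩
    have hε2 : (0:ℝ≥0∞) < ε/2 := ENNReal.div_pos hε.ne' (by norm_num)
    have hev : ∀ᶠ z in nhdsWithin x s, edist (f z) (f x) < ε/2 :=
      (EMetric.tendsto_nhds.1 (hf x hxs)) _ hε2
    obtain ⟨δ, hδ0, hδ⟩ := Metric.mem_nhdsWithin_iff.1 hev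
    set y₀ := min (x + δ/2) 1 with hy₀
    have hy₀x : x < y₀ := lt_min (by linarith) hx1
    have hy₀1 : y₀ ≤ 1 := min_le_right _ _
    have hy₀ball : ∀ z, x ≤ z → z ≤ y₀ → z ∈ Metric.ball x δ := by
      intro z h1 h2
      rw [Metric.mem_ball, Real.dist_eq, abs_of_nonneg (by linarith)]
      have : z ≤ x + δ/2 := le_trans h2 (min_le_left _ _)
      linarith
    have hy₀s : y₀ ∈ s ∩ Icc x 1 := ⟨⟨by positivity, hy₀1⟩, hy₀x.le, hy₀1⟩
    have hWpos : W ≠ 0 := by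
      intro h; rw [h] at hcase; exact absurd hcase (not_lt.2 zero_le)
    have hsub : W - ε/2 < W := ENNReal.sub_lt_self hWfin hWpos hε2.ne'
    obtain ⟨⟨n, u, hu, us⟩, hsum⟩ : ∃ p : ℕ × {u : ℕ → ℝ // Monotone u ∧ ∀ i, u i ∈ s ∩ Icc x 1},
        W - ε/2 < ∑ i ∈ Finset.range p.1, edist (f (p.2.1 (i+1))) (f (p.2.1 i)) :=
      lt_iSup_iff.mp hsub
    obtain ⟨w, mw, hwmono, hws, hmem, hsum2⟩ := eVariationOn.add_point f hy₀s u hu us n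
    obtain ⟨Nidx, hNlt, hwN⟩ := hmem
    rw [mem_Iio] at hNlt
    have hSsum : W - ε/2 < ∑ i ∈ Finset.range mw, edist (f (w (i+1))) (f (w i)) :=
      hsum.trans_le hsum2
    have hex : ∃ i, x < w i := ⟨Nidx, hwN ▸ hy₀x⟩
    set j := Nat.find hex with hj
    have hj1 : x < w j := Nat.find_spec hex
    have hjle : j ≤ Nidx := Nat.find_min' hex (hwN ▸ hy₀x)
    have hjm : j < mw := lt_of_le_of_lt hjle hNlt
    have hwjle : w j ≤ y₀ := hwN ▸ hwmono hjle
    have hedistj : edist (f (w j)) (f x) < ε/2 :=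
      hδ ⟨hy₀ball _ hj1.le hwjle, (hws j).1⟩
    have hprev : ∀ i, i < j → w i = x := fun i hi =>
      le_antisymm (not_lt.1 (Nat.find_min hex hi)) (hws i).2.1
    set V' := eVariationOn f (s ∩ Icc (w j) 1) with hV'
    have hpart2 : ∑ i ∈ Finset.Ico j mw, edist (f (w (i+1))) (f (w i)) ≤ V' := by
      apply eVariationOn.sum_le_of_monotoneOn_Icc
      · exact fun i1 _ i2 _ h12 => hwmono h12
      · exact fun i hi => ⟨(hws i).1, hwmono hi.1, (hws i).1.2⟩
    have hpart1 : ∑ i ∈ Finset.range j, edist (f (w (i+1))) (f (w i)) ≤ ε/2 := by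
      rcases Nat.eq_zero_or_pos j with h | h
      · simp [h]
      · obtain ⟨j0, hj0⟩ : ∃ j0, j = j0 + 1 := ⟨j - 1, by omega⟩
        have hprev' : ∀ i, i < j0 + 1 → w i = x := fun i hi => hprev i (by rw [hj0]; exact hi)
        have hed' : edist (f (w (j0+1))) (f x) < ε/2 := by rw [← hj0]; exact hedistj
        rw [hj0, Finset.sum_range_succ, Finset.sum_eq_zero (fun i hi => ?_), zero_add,
          hprev' j0 (by omega)]
        · exact hed'.le
        · rw [Finset.mem_range] at hi
          rw [hprev' i (by omega), hprev' (i+1) (by omega), edist_self]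
    have hsplit : ∑ i ∈ Finset.range mw, edist (f (w (i+1))) (f (w i)) =
        (∑ i ∈ Finset.range j, edist (f (w (i+1))) (f (w i))) +
        ∑ i ∈ Finset.Ico j mw, edist (f (w (i+1))) (f (w i)) := by
      simp only [Finset.range_eq_Ico]
      rw [← Finset.sum_Ico_consecutive _ (Nat.zero_le j) hjm.le]
    have hWle : W ≤ V' + ε := by
      have h1 : W - ε/2 ≤ ε/2 + V' :=
        le_trans hSsum.le (by rw [hsplit]; exact add_le_add hpart1 hpart2)
      have h2 : W ≤ ε/2 + V' + ε/2 := tsub_le_iff_right.1 h1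
      calc W ≤ ε/2 + V' + ε/2 := h2
        _ = V' + (ε/2 + ε/2) := by ring
        _ = V' + ε := by rw [ENNReal.add_halves]
    have hVV : eVariationOn f (s ∩ Icc x (w j)) + V' = W :=
      eVariationOn.Icc_add_Icc f hj1.le (hws j).1.2 (hws j).1
    have hV'fin : V' ≠ ⊤ := ne_top_of_le_ne_top hfin (eVariationOn.mono f inter_subset_left)
    have hfinal : eVariationOn f (s ∩ Icc x (w j)) + V' ≤ ε + V' := by
      rw [hVV]; rw [add_comm] at hWle; exact hWle
    exact ⟨w j, hj1, (hws j).1.2, (ENNReal.add_le_add_iff_right hV'fin).1 hfinal⟩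

private lemma evar_left {E : Type*} [PseudoEMetricSpace E] {f : ℝ → E}
    (hf : ContinuousOn f (Icc 0 1)) (hfin : eVariationOn f (Icc 0 1) ≠ ⊤)
    {x : ℝ} (hx0 : 0 < x) (hx1 : x ≤ 1) {ε : ℝ≥0∞} (hε : 0 < ε) :
    ∃ y, 0 ≤ y ∧ y < x ∧ eVariationOn f (Icc 0 1 ∩ Icc y x) ≤ ε := by
  have hinj : Function.Injective (fun t : ℝ => 1 - t) := fun a b h => by
    simp only at h; linarith
  have key : ∀ a b : ℝ, eVariationOn (f ∘ (fun t : ℝ => 1 - t)) (Icc 0 1 ∩ Icc a b)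
      = eVariationOn f (Icc 0 1 ∩ Icc (1-b) (1-a)) := by
    intro a b
    rw [eVariationOn.comp_eq_of_antitoneOn f _
      (fun u _ v _ huv => by linarith)]
    congr 1
    rw [Set.image_inter hinj, Set.image_const_sub_Icc, Set.image_const_sub_Icc]
    norm_num
  have hgcont : ContinuousOn (f ∘ (fun t : ℝ => 1 - t)) (Icc 0 1) := by
    apply hf.comp ((continuous_const.sub continuous_id).continuousOn)
    intro t ht
    simp only [mem_Icc, id_eq, Pi.sub_apply] at ht ⊢
    constructor <;> linarith [ht.1, ht.2]
  have hgfin : eVariationOn (f ∘ (fun t : ℝ => 1 - t)) (Icc 0 1) ≠ ⊤ := by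
    have := key 0 1
    rw [inter_self] at this
    norm_num at this
    rw [this]
    exact hfin
  obtain ⟨y', h1, h2, h3⟩ := evar_right hgcont hgfin (x := 1 - x) (by linarith) (by linarith) hε
  refine ⟨1 - y', by linarith, by linarith, ?_⟩
  have := key (1 - x) y'
  rw [this] at h3
  convert h3 using 3
  ring_nf

private lemma evar_ivt {E : Type*} [PseudoEMetricSpace E] {f : ℝ → E}
    (hf : ContinuousOn f (Icc 0 1)) (hfin : eVariationOn f (Icc 0 1) ≠ ⊤)
    {a : ℝ} (ha : a ∈ Icc (0:ℝ) 1) {W : ℝ≥0∞}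
    (h1 : eVariationOn f (Icc 0 1 ∩ Icc 0 a) ≤ W)
    (h2 : W ≤ eVariationOn f (Icc 0 1 ∩ Icc 0 1)) :
    ∃ t, a ≤ t ∧ t ∈ Icc (0:ℝ) 1 ∧ eVariationOn f (Icc 0 1 ∩ Icc 0 t) = W := by
  classical
  set v : ℝ → ℝ≥0∞ := fun t => eVariationOn f (Icc 0 1 ∩ Icc 0 t) with hv
  have hvmono : ∀ {s t : ℝ}, s ≤ t → v s ≤ v t := fun {s t} hst =>
    eVariationOn.mono f (inter_subset_inter_right _ (Icc_subset_Icc_right hst))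
  have hadd : ∀ {s t : ℝ}, s ∈ Icc (0:ℝ) 1 → s ≤ t →
      v s + eVariationOn f (Icc 0 1 ∩ Icc s t) = v t := fun {s t} hs hst =>
    eVariationOn.Icc_add_Icc f hs.1 hst hs
  set S := {s : ℝ | s ∈ Icc (0:ℝ) 1 ∧ a ≤ s ∧ v s ≤ W} with hS
  have hSne : a ∈ S := ⟨ha, le_rfl, h1⟩
  have hSbdd : BddAbove S := ⟨1, fun s hs => hs.1.2⟩
  set t := sSup S with ht
  have ha_le : a ≤ t := le_csSup hSbdd hSne
  have ht1 : t ≤ 1 := csSup_le ⟨a, hSne⟩ (fun s hs => hs.1.2)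
  have ht0 : 0 ≤ t := le_trans ha.1 ha_le
  have claim1 : v t ≤ W := by
    apply ENNReal.le_of_forall_pos_le_add
    intro ε hε _
    by_cases hta : t ≤ a
    · have heq : t = a := le_antisymm hta ha_le
      rw [heq]; exact le_trans h1 le_self_add
    · push_neg at hta
      have hεe : (0:ℝ≥0∞) < (ε : ℝ≥0∞) := ENNReal.coe_pos.2 hε
      obtain ⟨y, hy0, hyt, hyvar⟩ := evar_left hf hfin (lt_of_le_of_lt ha.1 hta) ht1 hεe
      obtain ⟨s, hsS, hs_gt⟩ := exists_lt_of_lt_csSup ⟨a, hSne⟩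
        (show max y a < t from max_lt hyt hta)
      have hst : s ≤ t := le_csSup hSbdd hsS
      calc v t = v s + eVariationOn f (Icc 0 1 ∩ Icc s t) := (hadd hsS.1 hst).symm
        _ ≤ W + eVariationOn f (Icc 0 1 ∩ Icc y t) := add_le_add hsS.2.2
            (eVariationOn.mono f (inter_subset_inter_right _
              (Icc_subset_Icc_left (le_of_lt (lt_of_le_of_lt (le_max_left y a) hs_gt)))))
        _ ≤ W + ε := add_le_add_right hyvar W
  refine ⟨t, ha_le, ⟨ht0, ht1⟩, le_antisymm claim1 ?_⟩
  by_contra hcon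
  push_neg at hcon
  have ht1' : t < 1 := by
    rcases lt_or_eq_of_le ht1 with h | h
    · exact h
    · exfalso; rw [h] at hcon; exact absurd h2 (not_le.2 hcon)
  obtain ⟨y, hty, hy1, hyvar⟩ := evar_right hf hfin ht0 ht1' (tsub_pos_of_lt hcon)
  have hvy : v y ≤ W := by
    calc v y = v t + eVariationOn f (Icc 0 1 ∩ Icc t y) := (hadd ⟨ht0, ht1⟩ hty.le).symm
      _ ≤ v t + (W - v t) := add_le_add_right hyvar _
      _ = W := add_tsub_cancel_of_le claim1
  have hyS : y ∈ S := ⟨⟨le_trans ht0 hty.le, hy1⟩, le_trans ha_le hty.le, hvy⟩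
  exact absurd (le_csSup hSbdd hyS) (not_le.2 hty)

end VariationLemmas

/-- The configuration space `C = A ×₂ B`, the ℓ²-product of two Euclidean spaces. -/
abbrev Csp (k m : ℕ) : Type :=
  WithLp 2 (EuclideanSpace ℝ (Fin k) × EuclideanSpace ℝ (Fin m))

/-- The `A`-component of a point of `C`. -/
noncomputable def fstC {k m : ℕ} (x : Csp k m) : EuclideanSpace ℝ (Fin k) :=
  (WithLp.equiv 2 _ x).1

/-- The `B`-component of a point of `C`. -/
noncomputable def sndC {k m : ℕ} (x : Csp k m) : EuclideanSpace ℝ (Fin m) :=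
  (WithLp.equiv 2 _ x).2

/-- The manifold `m(a) = {a} × B ⊆ C` determined by a point `a ∈ A`. -/
def mA {k m : ℕ} (a : EuclideanSpace ℝ (Fin k)) : Set (Csp k m) :=
  {x | fstC x = a}

/-- The manifold `m(b) = A × {b} ⊆ C` determined by a point `b ∈ B`. -/
def mB {k m : ℕ} (b : EuclideanSpace ℝ (Fin m)) : Set (Csp k m) :=
  {x | sndC x = b}

section GeometryLemmas

open Set

noncomputable def ptC {k m : ℕ} (a : EuclideanSpace ℝ (Fin k))
    (b : EuclideanSpace ℝ (Fin m)) : Csp k m :=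
  (WithLp.equiv 2 _).symm (a, b)

@[simp] lemma fstC_ptC {k m : ℕ} (a : EuclideanSpace ℝ (Fin k))
    (b : EuclideanSpace ℝ (Fin m)) : fstC (ptC a b) = a := rfl

@[simp] lemma sndC_ptC {k m : ℕ} (a : EuclideanSpace ℝ (Fin k))
    (b : EuclideanSpace ℝ (Fin m)) : sndC (ptC a b) = b := rfl

@[simp] lemma ptC_fstC_sndC {k m : ℕ} (x : Csp k m) : ptC (fstC x) (sndC x) = x := rfl

lemma distC_eq {k m : ℕ} (x y : Csp k m) :
    dist x y = Real.sqrt (dist (fstC x) (fstC y)^2 + dist (sndC x) (sndC y)^2) :=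
  WithLp.prod_dist_eq_of_L2 x y

lemma distC_le {k m : ℕ} {x y : Csp k m} {d1 d2 c : ℝ}
    (h1 : dist (fstC x) (fstC y) ≤ d1) (h2 : dist (sndC x) (sndC y) ≤ d2)
    (hsq : d1^2 + d2^2 ≤ c^2) (hc : 0 ≤ c) : dist x y ≤ c := by
  rw [distC_eq]
  have e1 : dist (fstC x) (fstC y)^2 ≤ d1^2 := by
    apply pow_le_pow_left₀ dist_nonneg h1
  have e2 : dist (sndC x) (sndC y)^2 ≤ d2^2 := by
    apply pow_le_pow_left₀ dist_nonneg h2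
  calc Real.sqrt (dist (fstC x) (fstC y)^2 + dist (sndC x) (sndC y)^2)
      ≤ Real.sqrt (c^2) := Real.sqrt_le_sqrt (by linarith)
    _ = c := Real.sqrt_sq hc

lemma dist_fstC_le {k m : ℕ} (x y : Csp k m) : dist (fstC x) (fstC y) ≤ dist x y := by
  rw [distC_eq]
  have h := Real.sqrt_le_sqrt (le_add_of_nonneg_right (sq_nonneg (dist (sndC x) (sndC y)))
    : dist (fstC x) (fstC y)^2 ≤ dist (fstC x) (fstC y)^2 + dist (sndC x) (sndC y)^2)
  rwa [Real.sqrt_sq dist_nonneg] at h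

lemma continuous_fstC {k m : ℕ} : Continuous (fun x : Csp k m => fstC x) :=
  continuous_fst.comp (WithLp.prod_continuous_ofLp 2 _ _)

lemma continuous_ptC_left {k m : ℕ} (y : EuclideanSpace ℝ (Fin m)) :
    Continuous (fun a : EuclideanSpace ℝ (Fin k) => ptC a y) :=
  (WithLp.prod_continuous_toLp 2 _ _).comp (continuous_id.prodMk continuous_const)

lemma convex_fixA {k m : ℕ} (a : EuclideanSpace ℝ (Fin k))
    (c : EuclideanSpace ℝ (Fin m)) (r : ℝ) :
    Convex ℝ {z : Csp k m | fstC z = a ∧ dist (sndC z) c ≤ r} := by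
  intro x hx y hy s t hs ht hst
  constructor
  · show fstC (s • x + t • y) = a
    have h : fstC (s • x + t • y) = s • fstC x + t • fstC y := rfl
    rw [h, hx.1, hy.1, ← add_smul, hst, one_smul]
  · show dist (sndC (s • x + t • y)) c ≤ r
    have h : sndC (s • x + t • y) = s • sndC x + t • sndC y := rfl
    rw [h]
    exact mem_closedBall.1 (convex_closedBall c r (mem_closedBall.2 hx.2)
      (mem_closedBall.2 hy.2) hs ht hst)

lemma convex_fixB {k m : ℕ} (b : EuclideanSpace ℝ (Fin m))
    (c : EuclideanSpace ℝ (Fin k)) (r : ℝ) :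
    Convex ℝ {z : Csp k m | sndC z = b ∧ dist (fstC z) c ≤ r} := by
  intro x hx y hy s t hs ht hst
  constructor
  · show sndC (s • x + t • y) = b
    have h : sndC (s • x + t • y) = s • sndC x + t • sndC y := rfl
    rw [h, hx.1, hy.1, ← add_smul, hst, one_smul]
  · show dist (fstC (s • x + t • y)) c ≤ r
    have h : fstC (s • x + t • y) = s • fstC x + t • fstC y := rfl
    rw [h]
    exact mem_closedBall.1 (convex_closedBall c r (mem_closedBall.2 hx.2)
      (mem_closedBall.2 hy.2) hs ht hst)

lemma joined_of_convex {k m : ℕ} {S U : Set (Csp k m)} (hconv : Convex ℝ S)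
    (hSU : S ⊆ U) {x y : Csp k m} (hx : x ∈ S) (hy : y ∈ S) : JoinedIn U x y :=
  haveI : ContinuousSMul ℝ (Csp k m) := inferInstance
  (JoinedIn.of_segment_subset (hconv.segment_subset hx hy)).mono hSU

lemma joined_moveA {k m : ℕ} {γ : ℝ → Csp k m} {T1 T2 : ℝ} (hT : T1 ≤ T2)
    (hsub : Icc T1 T2 ⊆ Icc 0 1) (hcont : ContinuousOn γ (Icc 0 1))
    (y : EuclideanSpace ℝ (Fin m)) {U : Set (Csp k m)}
    (hmem : ∀ t ∈ Icc T1 T2, ptC (fstC (γ t)) y ∈ U) :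
    JoinedIn U (ptC (fstC (γ T1)) y) (ptC (fstC (γ T2)) y) := by
  have hσmem : ∀ u : unitInterval, T1 + (u : ℝ) * (T2 - T1) ∈ Icc T1 T2 := by
    intro u
    constructor
    · have := u.2.1; nlinarith
    · have h1 := u.2.1; have h2 := u.2.2; nlinarith
  have hσcont : Continuous (fun u : unitInterval => T1 + (u : ℝ) * (T2 - T1)) :=
    continuous_const.add (continuous_subtype_val.mul continuous_const)
  refine ⟨⟨⟨fun u => ptC (fstC (γ (T1 + (u : ℝ) * (T2 - T1)))) y, ?_⟩, ?_, ?_⟩, ?_⟩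
  · exact (continuous_ptC_left y).comp (continuous_fstC.comp
      (hcont.comp_continuous hσcont (fun u => hsub (hσmem u))))
  · show ptC (fstC (γ (T1 + ((0 : unitInterval) : ℝ) * (T2 - T1)))) y = _
    norm_num
  · show ptC (fstC (γ (T1 + ((1 : unitInterval) : ℝ) * (T2 - T1)))) y = _
    have h1 : ((1 : unitInterval) : ℝ) = 1 := rfl
    rw [h1, show T1 + 1 * (T2 - T1) = T2 by ring]
  · intro u
    exact hmem _ (hσmem u)

end GeometryLemmas

section MeasureLemmas

lemma prob_all_miss {X : Type*} [MeasurableSpace X] (μ : Measure X) [IsProbabilityMeasure μ]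
    (n : ℕ) {S : Set X} (hS : MeasurableSet S) {α : ℝ≥0∞} (hα : α ≤ μ S) :
    (Measure.pi fun _ : Fin n => μ) {a | ∀ u, a u ∉ S} ≤ (1 - α)^n := by
  have hset : {a : Fin n → X | ∀ u, a u ∉ S} = Set.pi Set.univ (fun _ => Sᶜ) := by
    ext a; simp [Set.mem_pi]
  rw [hset, MeasureTheory.Measure.pi_pi]
  calc ∏ _u : Fin n, μ Sᶜ = (μ Sᶜ)^n := by
        rw [Finset.prod_const, Finset.card_univ, Fintype.card_fin]
    _ ≤ (1-α)^n := by
        apply pow_le_pow_left₀ zero_le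
        rw [prob_compl_eq_one_sub hS]
        exact tsub_le_tsub_left hα 1

end MeasureLemmas

set_option maxHeartbeats 2000000 in
theorem stmt6 (k m : ℕ) (F : Set (Csp k m)) (ρ L : ℝ) (hρ : 0 < ρ) (hL : 0 < L)
    (p q : Csp k m) (γ : ℝ → Csp k m)
    (hcont : ContinuousOn γ (Set.Icc 0 1)) (h0 : γ 0 = p) (h1 : γ 1 = q)
    (hclear : ∀ t ∈ Set.Icc (0 : ℝ) 1, closedBall (γ t) ρ ⊆ F)
    (hlen : eVariationOn γ (Set.Icc 0 1) ≤ ENNReal.ofReal L)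
    (μ : Measure (EuclideanSpace ℝ (Fin k))) (ν : Measure (EuclideanSpace ℝ (Fin m)))
    [IsProbabilityMeasure μ] [IsProbabilityMeasure ν]
    (α β : ℝ≥0∞) (hα0 : 0 < α) (hα1 : α ≤ 1) (hβ0 : 0 < β) (hβ1 : β ≤ 1)
    (hμ : ∀ t ∈ Set.Icc (0 : ℝ) 1, α ≤ μ (closedBall (fstC (γ t)) (ρ / Real.sqrt 2)))
    (hν : ∀ t ∈ Set.Icc (0 : ℝ) 1, ∀ s ∈ Set.Icc (0 : ℝ) 1, dist (γ t) (γ s) ≤ ρ →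
      β ≤ ν (closedBall (sndC (γ t)) (ρ / Real.sqrt 2) ∩
             closedBall (sndC (γ s)) (ρ / Real.sqrt 2)))
    (nA nB : ℕ) :
    ∃ E : Set ((Fin nA → EuclideanSpace ℝ (Fin k)) × (Fin nB → EuclideanSpace ℝ (Fin m))),
      MeasurableSet E ∧
      1 - (⌈L / ρ⌉₊ : ℝ≥0∞) * ((1 - α) ^ nA + (1 - β) ^ nB) ≤
        ((Measure.pi fun _ : Fin nA => μ).prod (Measure.pi fun _ : Fin nB => ν)) E ∧
      ∀ ω ∈ E, ∃ δ : Path p q, ∀ t, δ t ∈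
        F ∩ (mA (fstC p) ∪ mA (fstC q) ∪ (⋃ u, mA (ω.1 u)) ∪ ⋃ v, mB (ω.2 v)) := by
  classical
  have hfin : eVariationOn γ (Set.Icc (0:ℝ) 1) ≠ ⊤ :=
    ne_top_of_le_ne_top ENNReal.ofReal_ne_top hlen
  set v : ℝ → ℝ≥0∞ := fun t => eVariationOn γ (Set.Icc 0 1 ∩ Set.Icc 0 t) with hvdef
  set N := ⌈L / ρ⌉₊ with hNdef
  have hN1 : 1 ≤ N := Nat.one_le_iff_ne_zero.2 (Nat.ceil_pos.2 (div_pos hL hρ)).ne'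
  have hV1 : v 1 = eVariationOn γ (Set.Icc (0:ℝ) 1) := by
    show eVariationOn γ (Set.Icc 0 1 ∩ Set.Icc 0 1) = _
    rw [Set.inter_self]
  have hw_top : v 1 ≤ (N:ℝ≥0∞) * ENNReal.ofReal ρ := by
    rw [hV1]
    refine le_trans hlen ?_
    rw [← ENNReal.ofReal_natCast N, ← ENNReal.ofReal_mul (by positivity)]
    apply ENNReal.ofReal_le_ofReal
    have hceil := Nat.le_ceil (L/ρ)
    rw [← hNdef] at hceil
    calc L = (L/ρ)*ρ := by field_simp
      _ ≤ N*ρ := mul_le_mul_of_nonneg_right hceil hρ.le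
  set w : ℕ → ℝ≥0∞ := fun i => min ((i:ℝ≥0∞) * ENNReal.ofReal ρ) (v 1) with hwdef
  have hw0 : w 0 = 0 := by simp [hwdef]
  have hwN : w N = v 1 := min_eq_right hw_top
  have hwmono : Monotone w := fun i j hij =>
    min_le_min (mul_le_mul_left (Nat.cast_le.2 hij) _) le_rfl
  have hwle : ∀ i, w i ≤ v 1 := fun i => min_le_right _ _
  have hwstep : ∀ i, w (i+1) ≤ w i + ENNReal.ofReal ρ := by
    intro i
    show min ((((i+1) : ℕ):ℝ≥0∞) * ENNReal.ofReal ρ) (v 1)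
      ≤ min (((i : ℕ):ℝ≥0∞) * ENNReal.ofReal ρ) (v 1) + ENNReal.ofReal ρ
    rw [← min_add_add_right]
    refine min_le_min ?_ le_self_add
    push_cast
    rw [add_mul, one_mul]
  have hv0 : v 0 = 0 := by
    apply eVariationOn.subsingleton
    intro x hx y hy
    have := hx.2; have := hy.2
    have hx0 : x = 0 := le_antisymm hx.2.2 hx.2.1
    have hy0 : y = 0 := le_antisymm hy.2.2 hy.2.1
    rw [hx0, hy0]
  have step : ∀ (i : ℕ) (x : ℝ), x ∈ Set.Icc (0:ℝ) 1 → v x = w i →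
      ∃ t, x ≤ t ∧ t ∈ Set.Icc (0:ℝ) 1 ∧ v t = w (i+1) := by
    intro i x hx hvx
    exact evar_ivt hcont hfin hx (W := w (i+1))
      (by show v x ≤ w (i+1); rw [hvx]; exact hwmono (Nat.le_succ i))
      (by show w (i+1) ≤ v 1; exact hwle (i+1))
  choose st hst1 hst2 hst3 using step
  set T : ℕ → ℝ := fun n => Nat.rec 0
    (fun i ti => if h : ti ∈ Set.Icc (0:ℝ) 1 ∧ v ti = w i then st i ti h.1 h.2 else 0) n with hT
  have hTsucc : ∀ i, T (i+1) =
      if h : T i ∈ Set.Icc (0:ℝ) 1 ∧ v (T i) = w i then st i (T i) h.1 h.2 else 0 :=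
    fun i => rfl
  have hTinv : ∀ i, T i ∈ Set.Icc (0:ℝ) 1 ∧ v (T i) = w i := by
    intro i
    induction i with
    | zero =>
      refine ⟨⟨le_rfl, zero_le_one⟩, ?_⟩
      rw [show T 0 = 0 from rfl, hv0, hw0]
    | succ i ih =>
      rw [hTsucc i, dif_pos ih]
      exact ⟨hst2 _ _ _ _, hst3 _ _ _ _⟩
  have hTmono : ∀ i, T i ≤ T (i+1) := by
    intro i
    rw [hTsucc i, dif_pos (hTinv i)]
    exact hst1 _ _ _ _
  set τ : ℕ → ℝ := fun i => if i < N then T i else 1 with hτ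
  have hτmem : ∀ i, τ i ∈ Set.Icc (0:ℝ) 1 := by
    intro i
    rw [hτ]
    dsimp only
    split
    · exact (hTinv _).1
    · exact ⟨zero_le_one, le_rfl⟩
  have hτstep : ∀ i, τ i ≤ τ (i+1) := by
    intro i
    by_cases h1 : i + 1 < N
    · rw [hτ]
      dsimp only
      rw [if_pos (by omega), if_pos h1]
      exact hTmono i
    · rw [hτ]
      dsimp only
      rw [if_neg h1]
      split
      · exact (hTinv _).1.2
      · exact le_rfl
  have hτv : ∀ i, v (τ i) = w (min i N) := by
    intro i
    rw [hτ]
    dsimp only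
    split
    · next h => rw [min_eq_left (le_of_lt h)]; exact (hTinv i).2
    · next h =>
      rw [min_eq_right (by omega), hwN]
  have hτ0 : τ 0 = 0 := by rw [hτ]; dsimp only; rw [if_pos (by omega)]; rfl
  have hτN : τ N = 1 := by rw [hτ]; dsimp only; rw [if_neg (lt_irrefl N)]
  have hvfin : ∀ t, v t ≠ ⊤ := fun t =>
    ne_top_of_le_ne_top hfin (eVariationOn.mono γ Set.inter_subset_left)
  have hpiece : ∀ i, eVariationOn γ (Set.Icc 0 1 ∩ Set.Icc (τ i) (τ (i+1)))
      ≤ ENNReal.ofReal ρ := by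
    intro i
    have hadd := eVariationOn.Icc_add_Icc γ (hτmem i).1 (hτstep i) (hτmem i)
    have hle : v (τ i) + eVariationOn γ (Set.Icc 0 1 ∩ Set.Icc (τ i) (τ (i+1)))
        ≤ v (τ i) + ENNReal.ofReal ρ := by
      rw [hadd]
      show v (τ (i+1)) ≤ v (τ i) + ENNReal.ofReal ρ
      rw [hτv, hτv]
      calc w (min (i+1) N) ≤ w (min i N + 1) := hwmono (by omega)
        _ ≤ w (min i N) + ENNReal.ofReal ρ := hwstep _
    exact (ENNReal.add_le_add_iff_left (hvfin _)).1 hle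
  have hdistW : ∀ i, dist (γ (τ i)) (γ (τ (i+1))) ≤ ρ := by
    intro i
    have he : edist (γ (τ i)) (γ (τ (i+1)))
        ≤ eVariationOn γ (Set.Icc 0 1 ∩ Set.Icc (τ i) (τ (i+1))) :=
      eVariationOn.edist_le γ ⟨hτmem i, le_rfl, hτstep i⟩ ⟨hτmem (i+1), hτstep i, le_rfl⟩
    have := le_trans he (hpiece i)
    rw [edist_dist] at this
    exact (ENNReal.ofReal_le_ofReal_iff hρ.le).1 this
  have hmid : ∀ i, ∀ t ∈ Set.Icc (τ i) (τ (i+1)),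
      dist (γ t) (γ (τ i)) ≤ ρ/2 ∨ dist (γ t) (γ (τ (i+1))) ≤ ρ/2 := by
    intro i t ht
    have hts : t ∈ Set.Icc (0:ℝ) 1 :=
      ⟨le_trans (hτmem i).1 ht.1, le_trans ht.2 (hτmem (i+1)).2⟩
    have hA1 : edist (γ (τ i)) (γ t) ≤ eVariationOn γ (Set.Icc 0 1 ∩ Set.Icc (τ i) t) :=
      eVariationOn.edist_le γ ⟨hτmem i, le_rfl, ht.1⟩ ⟨hts, ht.1, le_rfl⟩
    have hA2 : edist (γ t) (γ (τ (i+1)))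
        ≤ eVariationOn γ (Set.Icc 0 1 ∩ Set.Icc t (τ (i+1))) :=
      eVariationOn.edist_le γ ⟨hts, le_rfl, ht.2⟩ ⟨hτmem (i+1), ht.2, le_rfl⟩
    have hadd := eVariationOn.Icc_add_Icc γ (s := Set.Icc (0:ℝ) 1) ht.1 ht.2 hts
    have hsum : edist (γ (τ i)) (γ t) + edist (γ t) (γ (τ (i+1))) ≤ ENNReal.ofReal ρ := by
      refine le_trans (add_le_add hA1 hA2) ?_
      rw [hadd]
      exact hpiece i
    rw [edist_dist, edist_dist, ← ENNReal.ofReal_add dist_nonneg dist_nonneg] at hsum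
    have hsum' := (ENNReal.ofReal_le_ofReal_iff hρ.le).1 hsum
    by_cases hc : dist (γ t) (γ (τ i)) ≤ ρ/2
    · exact Or.inl hc
    · right
      rw [dist_comm (γ (τ i)) (γ t)] at hsum'
      linarith
  -- geometry setup
  set r : ℝ := ρ / Real.sqrt 2 with hr
  have hr0 : 0 ≤ r := by positivity
  have hr2 : r^2 = ρ^2/2 := by
    rw [hr, div_pow, Real.sq_sqrt (by norm_num : (0:ℝ) ≤ 2)]
  -- events
  set SA : ℕ → Set (EuclideanSpace ℝ (Fin k)) :=
    fun i => closedBall (fstC (γ (τ i))) r with hSA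
  set TB : ℕ → Set (EuclideanSpace ℝ (Fin m)) :=
    fun i => closedBall (sndC (γ (τ i))) r ∩ closedBall (sndC (γ (τ (i+1)))) r with hTB
  set EA : Set ((Fin nA → EuclideanSpace ℝ (Fin k)) × (Fin nB → EuclideanSpace ℝ (Fin m))) :=
    ⋂ i ∈ Finset.Ico 1 N, {ω | ∃ u, ω.1 u ∈ SA i} with hEA
  set EB : Set ((Fin nA → EuclideanSpace ℝ (Fin k)) × (Fin nB → EuclideanSpace ℝ (Fin m))) :=
    ⋂ i ∈ Finset.range N, {ω | ∃ vv, ω.2 vv ∈ TB i} with hEB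
  have hMA : ∀ i : ℕ, MeasurableSet {ω : (Fin nA → EuclideanSpace ℝ (Fin k)) ×
      (Fin nB → EuclideanSpace ℝ (Fin m)) | ∃ u, ω.1 u ∈ SA i} := by
    intro i
    have hset : {ω : (Fin nA → EuclideanSpace ℝ (Fin k)) ×
        (Fin nB → EuclideanSpace ℝ (Fin m)) | ∃ u, ω.1 u ∈ SA i}
        = ⋃ u, (fun ω : (Fin nA → EuclideanSpace ℝ (Fin k)) ×
          (Fin nB → EuclideanSpace ℝ (Fin m)) => ω.1 u) ⁻¹' (SA i) := by
      ext ω; simp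
    rw [hset]
    exact MeasurableSet.iUnion fun u =>
      ((measurable_pi_apply u).comp measurable_fst) measurableSet_closedBall
  have hMB : ∀ i : ℕ, MeasurableSet {ω : (Fin nA → EuclideanSpace ℝ (Fin k)) ×
      (Fin nB → EuclideanSpace ℝ (Fin m)) | ∃ vv, ω.2 vv ∈ TB i} := by
    intro i
    have hset : {ω : (Fin nA → EuclideanSpace ℝ (Fin k)) ×
        (Fin nB → EuclideanSpace ℝ (Fin m)) | ∃ vv, ω.2 vv ∈ TB i}
        = ⋃ vv, (fun ω : (Fin nA → EuclideanSpace ℝ (Fin k)) ×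
          (Fin nB → EuclideanSpace ℝ (Fin m)) => ω.2 vv) ⁻¹' (TB i) := by
      ext ω; simp
    rw [hset]
    exact MeasurableSet.iUnion fun vv =>
      ((measurable_pi_apply vv).comp measurable_snd)
        (measurableSet_closedBall.inter measurableSet_closedBall)
  have hEAm : MeasurableSet EA := by
    rw [hEA]
    exact MeasurableSet.biInter (Set.to_countable _) (fun i _ => hMA i)
  have hEBm : MeasurableSet EB := by
    rw [hEB]
    exact MeasurableSet.biInter (Set.to_countable _) (fun i _ => hMB i)
  set P := (Measure.pi fun _ : Fin nA => μ).prod (Measure.pi fun _ : Fin nB => ν) with hP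
  haveI : IsProbabilityMeasure P := by rw [hP]; infer_instance
  refine ⟨EA ∩ EB, hEAm.inter hEBm, ?_, ?_⟩
  · -- probability bound
    have hPA : ∀ i ∈ Finset.Ico 1 N, P {ω : (Fin nA → EuclideanSpace ℝ (Fin k)) ×
        (Fin nB → EuclideanSpace ℝ (Fin m)) | ∃ u, ω.1 u ∈ SA i}ᶜ ≤ (1-α)^nA := by
      intro i _
      have hcompl : {ω : (Fin nA → EuclideanSpace ℝ (Fin k)) ×
          (Fin nB → EuclideanSpace ℝ (Fin m)) | ∃ u, ω.1 u ∈ SA i}ᶜ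
          = {a | ∀ u, a u ∉ SA i} ×ˢ Set.univ := by
        ext ω
        simp [Set.mem_prod, not_exists]
      rw [hcompl, hP, Measure.prod_prod, measure_univ, mul_one]
      exact prob_all_miss μ nA measurableSet_closedBall (hμ (τ i) (hτmem i))
    have hPB : ∀ i ∈ Finset.range N, P {ω : (Fin nA → EuclideanSpace ℝ (Fin k)) ×
        (Fin nB → EuclideanSpace ℝ (Fin m)) | ∃ vv, ω.2 vv ∈ TB i}ᶜ ≤ (1-β)^nB := by
      intro i _
      have hcompl : {ω : (Fin nA → EuclideanSpace ℝ (Fin k)) ×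
          (Fin nB → EuclideanSpace ℝ (Fin m)) | ∃ vv, ω.2 vv ∈ TB i}ᶜ
          = Set.univ ×ˢ {b | ∀ vv, b vv ∉ TB i} := by
        ext ω
        simp [Set.mem_prod, not_exists]
      rw [hcompl, hP, Measure.prod_prod, measure_univ, one_mul]
      exact prob_all_miss ν nB (measurableSet_closedBall.inter measurableSet_closedBall)
        (hν (τ i) (hτmem i) (τ (i+1)) (hτmem (i+1)) (hdistW i))
    have hEc : P (EA ∩ EB)ᶜ ≤ (N:ℝ≥0∞) * ((1-α)^nA + (1-β)^nB) := by
      rw [Set.compl_inter]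
      refine le_trans (measure_union_le _ _) ?_
      have hbd1 : P EAᶜ ≤ (N:ℝ≥0∞) * (1-α)^nA := by
        rw [hEA, Set.compl_iInter₂]
        refine le_trans (measure_biUnion_finset_le _ _) ?_
        calc ∑ i ∈ Finset.Ico 1 N, P {ω : (Fin nA → EuclideanSpace ℝ (Fin k)) ×
              (Fin nB → EuclideanSpace ℝ (Fin m)) | ∃ u, ω.1 u ∈ SA i}ᶜ
            ≤ ∑ _i ∈ Finset.Ico 1 N, (1-α)^nA := Finset.sum_le_sum hPA
          _ = ((N-1 : ℕ) : ℝ≥0∞) * (1-α)^nA := by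
              rw [Finset.sum_const, Nat.card_Ico, nsmul_eq_mul]
          _ ≤ (N:ℝ≥0∞) * (1-α)^nA :=
              mul_le_mul_left (Nat.cast_le.2 (Nat.sub_le N 1)) _
      have hbd2 : P EBᶜ ≤ (N:ℝ≥0∞) * (1-β)^nB := by
        rw [hEB, Set.compl_iInter₂]
        refine le_trans (measure_biUnion_finset_le _ _) ?_
        calc ∑ i ∈ Finset.range N, P {ω : (Fin nA → EuclideanSpace ℝ (Fin k)) ×
              (Fin nB → EuclideanSpace ℝ (Fin m)) | ∃ vv, ω.2 vv ∈ TB i}ᶜ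
            ≤ ∑ _i ∈ Finset.range N, (1-β)^nB := Finset.sum_le_sum hPB
          _ = (N:ℝ≥0∞) * (1-β)^nB := by
              rw [Finset.sum_const, Finset.card_range, nsmul_eq_mul]
      calc P EAᶜ + P EBᶜ ≤ (N:ℝ≥0∞) * (1-α)^nA + (N:ℝ≥0∞) * (1-β)^nB :=
            add_le_add hbd1 hbd2
        _ = (N:ℝ≥0∞) * ((1-α)^nA + (1-β)^nB) := (mul_add _ _ _).symm
    have huniv : (1:ℝ≥0∞) ≤ P (EA ∩ EB) + P (EA ∩ EB)ᶜ := by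
      calc (1:ℝ≥0∞) = P Set.univ := measure_univ.symm
        _ = P ((EA ∩ EB) ∪ (EA ∩ EB)ᶜ) := by rw [Set.union_compl_self]
        _ ≤ P (EA ∩ EB) + P (EA ∩ EB)ᶜ := measure_union_le _ _
    rw [tsub_le_iff_right]
    exact le_trans huniv (add_le_add_right hEc _)
  · -- path construction
    intro ω hω
    have hωA : ∀ i, 1 ≤ i → i < N → ∃ u, ω.1 u ∈ SA i := by
      intro i hi1 hi2
      have := hω.1
      rw [hEA] at this
      exact Set.mem_iInter₂.1 this i (Finset.mem_Ico.2 ⟨hi1, hi2⟩)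
    have hωB : ∀ i, i < N → ∃ vv, ω.2 vv ∈ TB i := by
      intro i hi
      have := hω.2
      rw [hEB] at this
      exact Set.mem_iInter₂.1 this i (Finset.mem_range.2 hi)
    set bigU : Set (Csp k m) :=
      mA (fstC p) ∪ mA (fstC q) ∪ (⋃ u, mA (ω.1 u)) ∪ ⋃ vv, mB (ω.2 vv) with hbigU
    set U : Set (Csp k m) := F ∩ bigU with hU
    -- the A samples
    set aa : ℕ → EuclideanSpace ℝ (Fin k) := fun i =>
      if i = 0 then fstC p
      else if h : 1 ≤ i ∧ i < N then ω.1 (Classical.choose (hωA i h.1 h.2))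
      else fstC q with haa
    have haa0 : aa 0 = fstC p := by simp [haa]
    have haaN : aa N = fstC q := by
      rw [haa]
      dsimp only
      rw [if_neg (by omega), dif_neg (by omega)]
    have haadist : ∀ i, i ≤ N → dist (aa i) (fstC (γ (τ i))) ≤ r := by
      intro i hi
      rcases Nat.eq_zero_or_pos i with h | h
      · rw [h, haa0, hτ0, h0, dist_self]; exact hr0
      · rcases eq_or_lt_of_le hi with h2 | h2
        · rw [h2, haaN, hτN, h1, dist_self]; exact hr0
        · have hmemSA := Classical.choose_spec (hωA i h h2)
          have haai : aa i = ω.1 (Classical.choose (hωA i h h2)) := by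
            rw [haa]
            dsimp only
            rw [if_neg (by omega), dif_pos ⟨h, h2⟩]
          rw [haai]
          exact mem_closedBall.1 hmemSA
    have haaU : ∀ i, i ≤ N → mA (aa i) ⊆ bigU := by
      intro i hi
      rcases Nat.eq_zero_or_pos i with h | h
      · rw [h, haa0, hbigU]
        intro z hz
        exact Or.inl (Or.inl (Or.inl hz))
      · rcases eq_or_lt_of_le hi with h2 | h2
        · rw [h2, haaN, hbigU]
          intro z hz
          exact Or.inl (Or.inl (Or.inr hz))
        · have haai : aa i = ω.1 (Classical.choose (hωA i h h2)) := by
            rw [haa]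
            dsimp only
            rw [if_neg (by omega), dif_pos ⟨h, h2⟩]
          rw [haai, hbigU]
          intro z hz
          exact Or.inl (Or.inr (Set.mem_iUnion.2 ⟨_, hz⟩))
    -- the B samples
    set bb : ℕ → EuclideanSpace ℝ (Fin m) := fun i =>
      if h : i < N then ω.2 (Classical.choose (hωB i h)) else sndC q with hbb
    have hbbdist : ∀ i, i < N → dist (bb i) (sndC (γ (τ i))) ≤ r ∧
        dist (bb i) (sndC (γ (τ (i+1)))) ≤ r := by
      intro i hi
      have hmemTB := Classical.choose_spec (hωB i hi)
      have hbbi : bb i = ω.2 (Classical.choose (hωB i hi)) := by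
        rw [hbb]; dsimp only; rw [dif_pos hi]
      rw [hbbi]
      exact ⟨mem_closedBall.1 hmemTB.1, mem_closedBall.1 hmemTB.2⟩
    have hbbU : ∀ i, i < N → mB (bb i) ⊆ bigU := by
      intro i hi
      have hbbi : bb i = ω.2 (Classical.choose (hωB i hi)) := by
        rw [hbb]; dsimp only; rw [dif_pos hi]
      rw [hbbi, hbigU]
      intro z hz
      exact Or.inr (Set.mem_iUnion.2 ⟨_, hz⟩)
    -- clearance
    have hclear1 : ∀ i, i ≤ N → ∀ (a' : EuclideanSpace ℝ (Fin k))
        (y' : EuclideanSpace ℝ (Fin m)), dist a' (fstC (γ (τ i))) ≤ r →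
        dist y' (sndC (γ (τ i))) ≤ r → ptC a' y' ∈ F := by
      intro i _ a' y' hd1 hd2
      apply hclear (τ i) (hτmem i)
      rw [mem_closedBall]
      apply distC_le (d1 := r) (d2 := r)
      · rw [fstC_ptC]; exact hd1
      · rw [sndC_ptC]; exact hd2
      · rw [hr2]; linarith
      · exact hρ.le
    -- joined pieces: B-move at waypoint i (A-coordinate fixed)
    have hfixA : ∀ i, i ≤ N → ∀ (a' : EuclideanSpace ℝ (Fin k))
        (y1 y2 : EuclideanSpace ℝ (Fin m)), dist a' (fstC (γ (τ i))) ≤ r →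
        dist y1 (sndC (γ (τ i))) ≤ r → dist y2 (sndC (γ (τ i))) ≤ r →
        mA a' ⊆ bigU → JoinedIn U (ptC a' y1) (ptC a' y2) := by
      intro i hi a' y1 y2 hd1 hd2 hd3 hsubU
      apply joined_of_convex (convex_fixA a' (sndC (γ (τ i))) r)
      · intro z hz
        constructor
        · have := hclear1 i hi (fstC z) (sndC z) (hz.1 ▸ hd1) hz.2
          rwa [ptC_fstC_sndC] at this
        · exact hsubU hz.1
      · exact ⟨fstC_ptC a' y1, by rw [sndC_ptC]; exact hd2⟩
      · exact ⟨fstC_ptC a' y2, by rw [sndC_ptC]; exact hd3⟩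
    -- A-move along piece i (B-coordinate fixed)
    have hmoveA : ∀ i, i < N → ∀ (x1 x2 : EuclideanSpace ℝ (Fin k))
        (y' : EuclideanSpace ℝ (Fin m)), dist x1 (fstC (γ (τ i))) ≤ r →
        dist x2 (fstC (γ (τ (i+1)))) ≤ r → dist y' (sndC (γ (τ i))) ≤ r →
        dist y' (sndC (γ (τ (i+1)))) ≤ r → mB y' ⊆ bigU →
        JoinedIn U (ptC x1 y') (ptC x2 y') := by
      intro i hi x1 x2 y' hd1 hd2 hd3 hd4 hsubU
      have hj1 : JoinedIn U (ptC x1 y') (ptC (fstC (γ (τ i))) y') := by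
        apply joined_of_convex (convex_fixB y' (fstC (γ (τ i))) r)
        · intro z hz
          constructor
          · have := hclear1 i hi.le (fstC z) (sndC z) hz.2 (hz.1 ▸ hd3)
            rwa [ptC_fstC_sndC] at this
          · exact hsubU hz.1
        · exact ⟨sndC_ptC x1 y', by rw [fstC_ptC]; exact hd1⟩
        · exact ⟨sndC_ptC _ y', by rw [fstC_ptC, dist_self]; exact hr0⟩
      have hj3 : JoinedIn U (ptC (fstC (γ (τ (i+1)))) y') (ptC x2 y') := by
        apply joined_of_convex (convex_fixB y' (fstC (γ (τ (i+1)))) r)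
        · intro z hz
          constructor
          · have := hclear1 (i+1) (by omega) (fstC z) (sndC z) hz.2 (hz.1 ▸ hd4)
            rwa [ptC_fstC_sndC] at this
          · exact hsubU hz.1
        · exact ⟨sndC_ptC _ y', by rw [fstC_ptC, dist_self]; exact hr0⟩
        · exact ⟨sndC_ptC x2 y', by rw [fstC_ptC]; exact hd2⟩
      have hj2 : JoinedIn U (ptC (fstC (γ (τ i))) y') (ptC (fstC (γ (τ (i+1)))) y') := by
        apply joined_moveA (hτstep i)
          (fun t ht => ⟨le_trans (hτmem i).1 ht.1, le_trans ht.2 (hτmem (i+1)).2⟩) hcont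
        intro t ht
        constructor
        · rcases hmid i t ht with hc | hc
          · apply hclear (τ i) (hτmem i)
            rw [mem_closedBall]
            apply distC_le (d1 := ρ/2) (d2 := r)
            · rw [fstC_ptC]
              exact le_trans (by
                have := dist_fstC_le (γ t) (γ (τ i)); exact this) hc
            · rw [sndC_ptC]; exact hd3
            · rw [hr2]; nlinarith [sq_nonneg ρ]
            · exact hρ.le
          · apply hclear (τ (i+1)) (hτmem (i+1))
            rw [mem_closedBall]
            apply distC_le (d1 := ρ/2) (d2 := r)
            · rw [fstC_ptC]
              exact le_trans (dist_fstC_le (γ t) (γ (τ (i+1)))) hc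
            · rw [sndC_ptC]; exact hd4
            · rw [hr2]; nlinarith [sq_nonneg ρ]
            · exact hρ.le
        · exact hsubU rfl
      exact (hj1.trans hj2).trans hj3
    -- the chain
    have hτ0γ : γ (τ 0) = p := by rw [hτ0, h0]
    have hτNγ : γ (τ N) = q := by rw [hτN, h1]
    have main : ∀ i, i < N → JoinedIn U p (ptC (aa i) (bb i)) := by
      intro i
      induction i with
      | zero =>
        intro h0N
        have hstart := hfixA 0 (Nat.zero_le N) (aa 0) (sndC p) (bb 0)
          (haadist 0 (Nat.zero_le N))
          (by rw [hτ0γ, dist_self]; exact hr0)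
          ((hbbdist 0 h0N).1)
          (haaU 0 (Nat.zero_le N))
        have hpe : ptC (aa 0) (sndC p) = p := by rw [haa0]; exact ptC_fstC_sndC p
        rwa [hpe] at hstart
      | succ i ih =>
        intro hsucc
        have hiN : i < N := by omega
        have hj1 := ih hiN
        have hj2 : JoinedIn U (ptC (aa i) (bb i)) (ptC (aa (i+1)) (bb i)) :=
          hmoveA i hiN (aa i) (aa (i+1)) (bb i) (haadist i hiN.le)
            (haadist (i+1) hsucc.le) (hbbdist i hiN).1 (hbbdist i hiN).2 (hbbU i hiN)
        have hj3 : JoinedIn U (ptC (aa (i+1)) (bb i)) (ptC (aa (i+1)) (bb (i+1))) :=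
          hfixA (i+1) hsucc.le (aa (i+1)) (bb i) (bb (i+1)) (haadist (i+1) hsucc.le)
            (hbbdist i hiN).2 (hbbdist (i+1) hsucc).1 (haaU (i+1) hsucc.le)
        exact (hj1.trans hj2).trans hj3
    obtain ⟨N0, hN0⟩ : ∃ N0, N = N0 + 1 := ⟨N-1, by omega⟩
    have hN0N : N0 < N := by omega
    have hlast1 := main N0 hN0N
    have hlast2 : JoinedIn U (ptC (aa N0) (bb N0)) (ptC (aa N) (bb N0)) := by
      have := hmoveA N0 hN0N (aa N0) (aa (N0+1)) (bb N0) (haadist N0 hN0N.le)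
        (haadist (N0+1) (by omega)) (hbbdist N0 hN0N).1 (hbbdist N0 hN0N).2 (hbbU N0 hN0N)
      rwa [← hN0] at this
    have hlast3 : JoinedIn U (ptC (aa N) (bb N0)) q := by
      have hbbN : dist (bb N0) (sndC (γ (τ N))) ≤ r := by
        have := (hbbdist N0 hN0N).2
        rwa [← hN0] at this
      have hend := hfixA N le_rfl (aa N) (bb N0) (sndC q) (haadist N le_rfl) hbbN
        (by rw [hτNγ, dist_self]; exact hr0) (haaU N le_rfl)
      have hqe : ptC (aa N) (sndC q) = q := by rw [haaN]; exact ptC_fstC_sndC q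
      rwa [hqe] at hend
    obtain ⟨δ, hδ⟩ := (hlast1.trans hlast2).trans hlast3
    exact ⟨δ, hδ⟩
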